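/- For all positive numbers a, b, c with b > a, there exist continuous functions h₁(a,b,c;·,·,·) : [0,a) × [0,∞) × [0,c) → [0,∞) (Case I) and h₂(a,b,c;·,·,·) : [0,a) × [0,b−a) × [0,c) → [0,∞) (Case II), with h₁(a,b,c;0,0,0) = h₂(a,b,c;0,0,0) = 0, satisfying the following. Let δ₁, δ₂, η be positive numbers with 0 < a − δ₁ < a < b (and in Case II additionally a < b − δ₂ < b) and 0 < c − η < c; let R₁ ∈ [a − δ₁, a], R₂ ∈ [b, b + δ₂] (Case I) or R₂ ∈ [b − δ₂, b] (Case II), and R̃₁, R̃₂ ∈ [c − η, c]. Write e(φ) = (cos φ, sin φ) ∈ ℝ². Suppose θ ∈ [−π/2, π/2] satisfies (R̃₁ e(π/2 + θ) − R̃₂ e(π/2 − θ)) · (R₁ e(π/2 + θ) − R₂ e(π/2 − θ)) = 0. Then −π/2 < θ < π/2, R̃₁ ≥ R̃₂, and max{ |(0,a) − R₁ e(π/2+θ)|, |(0,b) − R₂ e(π/2−θ)|, |(0,c) − R̃₁ e(π/2+θ)|, |(0,c) − R̃₂ e(π/2−θ)| } ≤ h_i(a,b,c; δ₁, δ₂,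 η), with i = 1 in Case I and i = 2 in Case II. -/

import Mathlib

open MeasureTheory Set Filter
open scoped NNReal ENNReal Topology

noncomputable section


/-- the planar unit vector `e(φ) = (cos φ, sin φ)`. -/
def e2 (φ : ℝ) : ℝ × ℝ := (Real.cos φ, Real.sin φ)

/-- the Euclidean dot product on the plane. -/
def dot2 (u v : ℝ × ℝ) : ℝ := u.1 * v.1 + u.2 * v.2

/-- the Euclidean norm on the plane. -/
def nrm2 (u : ℝ × ℝ) : ℝ := Real.sqrt (u.1 ^ 2 + u.2 ^ 2)

/-- the bounding property of the function `h₁` in Lemma 5.4 (Case I). -/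
def SelBoundI (a b c : ℝ) (h : ℝ × ℝ × ℝ → ℝ) : Prop :=
  ∀ δ₁ δ₂ η R₁ R₂ Rt₁ Rt₂ θ : ℝ,
    0 < δ₁ → δ₁ < a → 0 < δ₂ → 0 < η → η < c →
    R₁ ∈ Icc (a - δ₁) a → R₂ ∈ Icc b (b + δ₂) →
    Rt₁ ∈ Icc (c - η) c → Rt₂ ∈ Icc (c - η) c →
    θ ∈ Icc (-(Real.pi / 2)) (Real.pi / 2) →
    dot2 (Rt₁ • e2 (Real.pi / 2 + θ) - Rt₂ • e2 (Real.pi / 2 - θ))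
      (R₁ • e2 (Real.pi / 2 + θ) - R₂ • e2 (Real.pi / 2 - θ)) = 0 →
    -(Real.pi / 2) < θ ∧ θ < Real.pi / 2 ∧ Rt₂ ≤ Rt₁ ∧
      nrm2 (((0:ℝ), a) - R₁ • e2 (Real.pi / 2 + θ)) ≤ h (δ₁, δ₂, η) ∧
      nrm2 (((0:ℝ), b) - R₂ • e2 (Real.pi / 2 - θ)) ≤ h (δ₁, δ₂, η) ∧
      nrm2 (((0:ℝ), c) - Rt₁ • e2 (Real.pi / 2 + θ)) ≤ h (δ₁, δ₂, η) ∧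
      nrm2 (((0:ℝ), c) - Rt₂ • e2 (Real.pi / 2 - θ)) ≤ h (δ₁, δ₂, η)

/-- the bounding property of the function `h₂` in Lemma 5.4 (Case II). -/
def SelBoundII (a b c : ℝ) (h : ℝ × ℝ × ℝ → ℝ) : Prop :=
  ∀ δ₁ δ₂ η R₁ R₂ Rt₁ Rt₂ θ : ℝ,
    0 < δ₁ → δ₁ < a → 0 < δ₂ → δ₂ < b - a → 0 < η → η < c →
    R₁ ∈ Icc (a - δ₁) a → R₂ ∈ Icc (b - δ₂) b →
    Rt₁ ∈ Icc (c - η) c → Rt₂ ∈ Icc (c - η) c →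
    θ ∈ Icc (-(Real.pi / 2)) (Real.pi / 2) →
    dot2 (Rt₁ • e2 (Real.pi / 2 + θ) - Rt₂ • e2 (Real.pi / 2 - θ))
      (R₁ • e2 (Real.pi / 2 + θ) - R₂ • e2 (Real.pi / 2 - θ)) = 0 →
    -(Real.pi / 2) < θ ∧ θ < Real.pi / 2 ∧ Rt₂ ≤ Rt₁ ∧
      nrm2 (((0:ℝ), a) - R₁ • e2 (Real.pi / 2 + θ)) ≤ h (δ₁, δ₂, η) ∧
      nrm2 (((0:ℝ), b) - R₂ • e2 (Real.pi / 2 - θ)) ≤ h (δ₁, δ₂, η) ∧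
      nrm2 (((0:ℝ), c) - Rt₁ • e2 (Real.pi / 2 + θ)) ≤ h (δ₁, δ₂, η) ∧
      nrm2 (((0:ℝ), c) - Rt₂ • e2 (Real.pi / 2 - θ)) ≤ h (δ₁, δ₂, η)

set_option maxHeartbeats 1600000

private lemma orth_expand_54 (R₁ R₂ Rt₁ Rt₂ θ : ℝ)
    (h : dot2 (Rt₁ • e2 (Real.pi / 2 + θ) - Rt₂ • e2 (Real.pi / 2 - θ))
      (R₁ • e2 (Real.pi / 2 + θ) - R₂ • e2 (Real.pi / 2 - θ)) = 0) :
    2 * Real.sin θ ^ 2 * (Rt₁ * R₂ + Rt₂ * R₁) = (Rt₁ - Rt₂) * (R₂ - R₁) := by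
  simp only [dot2, e2, Real.cos_pi_div_two_sub, Real.sin_pi_div_two_sub,
    Real.cos_add, Real.sin_add, Real.cos_pi_div_two, Real.sin_pi_div_two,
    Prod.smul_mk, smul_eq_mul, Prod.mk_sub_mk] at h
  linear_combination h - (Rt₁ - Rt₂) * (R₁ - R₂) * (Real.sin_sq_add_cos_sq θ)

private lemma nrm2_eq_54 (x R φ : ℝ) :
    nrm2 (((0:ℝ), x) - R • e2 φ) = Real.sqrt (x ^ 2 + R ^ 2 - 2 * x * R * Real.sin φ) := by
  simp only [nrm2, e2, Prod.smul_mk, smul_eq_mul, Prod.mk_sub_mk]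
  congr 1
  nlinarith [Real.sin_sq_add_cos_sq φ]

private lemma dist_step_54 (x R δ E C coθ : ℝ) (hx : 0 < x) (hR0 : 0 < R)
    (hxR : (x - R) ^ 2 ≤ δ ^ 2) (hco : 2 * (1 - coθ) ≤ E) (hE0 : 0 ≤ E)
    (hC : 2 * x * R ≤ C) :
    x ^ 2 + R ^ 2 - 2 * x * R * coθ ≤ δ ^ 2 + C * E := by
  nlinarith [mul_le_mul_of_nonneg_left hco (mul_nonneg hx.le hR0.le),
    mul_le_mul_of_nonneg_right hC hE0,
    mul_nonneg (mul_nonneg hx.le hR0.le) hE0]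

private lemma master_54 (a b c δ₁ δ₂ η R₁ R₂ Rt₁ Rt₂ θ E C : ℝ)
    (hb : 0 < b)
    (ha1 : 0 < a - δ₁) (hc1 : 0 < c - η)
    (hR₁ : R₁ ∈ Icc (a - δ₁) a)
    (hR₁₂ : R₁ < R₂)
    (hbR₂ : (b - R₂) ^ 2 ≤ δ₂ ^ 2)
    (hRt₁ : Rt₁ ∈ Icc (c - η) c) (hRt₂ : Rt₂ ∈ Icc (c - η) c)
    (hθ : θ ∈ Icc (-(Real.pi / 2)) (Real.pi / 2))
    (horth : dot2 (Rt₁ • e2 (Real.pi / 2 + θ) - Rt₂ • e2 (Real.pi / 2 - θ))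
      (R₁ • e2 (Real.pi / 2 + θ) - R₂ • e2 (Real.pi / 2 - θ)) = 0)
    (hE0 : 0 ≤ E)
    (hE : (Rt₁ - Rt₂) * (R₂ - R₁) ≤ E * (Rt₁ * R₂ + Rt₂ * R₁))
    (hCa : 2 * a * R₁ ≤ C) (hCb : 2 * b * R₂ ≤ C)
    (hCc1 : 2 * c * Rt₁ ≤ C) (hCc2 : 2 * c * Rt₂ ≤ C) :
    -(Real.pi / 2) < θ ∧ θ < Real.pi / 2 ∧ Rt₂ ≤ Rt₁ ∧
      nrm2 (((0:ℝ), a) - R₁ • e2 (Real.pi / 2 + θ)) ≤ Real.sqrt (δ₁^2+δ₂^2+η^2 + C*E) ∧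
      nrm2 (((0:ℝ), b) - R₂ • e2 (Real.pi / 2 - θ)) ≤ Real.sqrt (δ₁^2+δ₂^2+η^2 + C*E) ∧
      nrm2 (((0:ℝ), c) - Rt₁ • e2 (Real.pi / 2 + θ)) ≤ Real.sqrt (δ₁^2+δ₂^2+η^2 + C*E) ∧
      nrm2 (((0:ℝ), c) - Rt₂ • e2 (Real.pi / 2 - θ)) ≤ Real.sqrt (δ₁^2+δ₂^2+η^2 + C*E) := by
  have key := orth_expand_54 R₁ R₂ Rt₁ Rt₂ θ horth
  have hR₁0 : 0 < R₁ := lt_of_lt_of_le ha1 hR₁.1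
  have hR₂0 : 0 < R₂ := hR₁0.trans hR₁₂
  have hRt₁0 : 0 < Rt₁ := lt_of_lt_of_le hc1 hRt₁.1
  have hRt₂0 : 0 < Rt₂ := lt_of_lt_of_le hc1 hRt₂.1
  have ha0 : 0 < a := hR₁0.trans_le hR₁.2
  have hc0 : 0 < c := hRt₁0.trans_le hRt₁.2
  have hden : 0 < Rt₁ * R₂ + Rt₂ * R₁ := by positivity
  have hs2 : 0 ≤ Real.sin θ ^ 2 := sq_nonneg _
  have h21 : Rt₂ ≤ Rt₁ := by nlinarith
  have hslt : Real.sin θ ^ 2 < 1 := by nlinarith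
  have hco : 0 ≤ Real.cos θ := Real.cos_nonneg_of_mem_Icc hθ
  have hco1 : Real.cos θ ≤ 1 := Real.cos_le_one θ
  have hcop : 0 < Real.cos θ := by
    rcases hco.lt_or_eq with h | h
    · exact h
    · exfalso; nlinarith [Real.sin_sq_add_cos_sq θ]
  have hθ1 : -(Real.pi / 2) < θ := by
    rcases hθ.1.lt_or_eq with h | h
    · exact h
    · exfalso; rw [← h] at hcop; simp [Real.cos_pi_div_two] at hcop
  have hθ2 : θ < Real.pi / 2 := by
    rcases hθ.2.lt_or_eq with h | h
    · exact h
    · exfalso; rw [h] at hcop; simp [Real.cos_pi_div_two] at hcop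
  have h2s : 2 * Real.sin θ ^ 2 ≤ E := by nlinarith
  have hcE : 2 * (1 - Real.cos θ) ≤ E := by nlinarith [Real.sin_sq_add_cos_sq θ]
  refine ⟨hθ1, hθ2, h21, ?_, ?_, ?_, ?_⟩ <;>
    rw [nrm2_eq_54] <;>
    apply Real.sqrt_le_sqrt <;>
    simp only [Real.sin_pi_div_two_sub, Real.sin_add, Real.cos_pi_div_two,
      Real.sin_pi_div_two, one_mul, zero_mul, add_zero, zero_add]
  · have := dist_step_54 a R₁ δ₁ E C (Real.cos θ) ha0 hR₁0
      (by nlinarith [hR₁.1, hR₁.2]) hcE hE0 hCa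
    nlinarith [sq_nonneg δ₂, sq_nonneg η]
  · have := dist_step_54 b R₂ δ₂ E C (Real.cos θ) hb hR₂0 hbR₂ hcE hE0 hCb
    nlinarith [sq_nonneg δ₁, sq_nonneg η]
  · have := dist_step_54 c Rt₁ η E C (Real.cos θ) hc0 hRt₁0
      (by nlinarith [hRt₁.1, hRt₁.2]) hcE hE0 hCc1
    nlinarith [sq_nonneg δ₁, sq_nonneg δ₂]
  · have := dist_step_54 c Rt₂ η E C (Real.cos θ) hc0 hRt₂0
      (by nlinarith [hRt₂.1, hRt₂.2]) hcE hE0 hCc2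
    nlinarith [sq_nonneg δ₁, sq_nonneg δ₂]

/-- Lemma 5.4 (two-dimensional selection of approximate collinear rank-one
connections), Cases I and II. -/
theorem stmt_16 (a b c : ℝ) (ha : 0 < a) (hb : 0 < b) (hc : 0 < c) (hab : a < b) :
    ∃ h₁ h₂ : ℝ × ℝ × ℝ → ℝ,
      ContinuousOn h₁ (Ico 0 a ×ˢ (Ici 0 ×ˢ Ico 0 c)) ∧
      (∀ d ∈ Ico 0 a ×ˢ (Ici 0 ×ˢ Ico 0 c), 0 ≤ h₁ d) ∧
      h₁ (0, 0, 0) = 0 ∧ SelBoundI a b c h₁ ∧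
      ContinuousOn h₂ (Ico 0 a ×ˢ (Ico 0 (b - a) ×ˢ Ico 0 c)) ∧
      (∀ d ∈ Ico 0 a ×ˢ (Ico 0 (b - a) ×ˢ Ico 0 c), 0 ≤ h₂ d) ∧
      h₂ (0, 0, 0) = 0 ∧ SelBoundII a b c h₂ := by
  refine ⟨fun d => Real.sqrt (d.1^2 + d.2.1^2 + d.2.2^2 +
      (4*(a+b+c+d.2.1)^2) * (d.2.2 * ((b-a) + d.1 + d.2.1) / ((c - d.2.2) * ((a - d.1) + b)))),
    fun d => Real.sqrt (d.1^2 + d.2.1^2 + d.2.2^2 +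
      (4*(a+b+c)^2) * (d.2.2 * ((b-a) + d.1) / ((c - d.2.2) * ((a - d.1) + (b - d.2.1))))),
    ?_, ?_, ?_, ?_, ?_, ?_, ?_, ?_⟩
  · -- continuity of h₁
    apply Real.continuous_sqrt.comp_continuousOn
    apply ContinuousOn.add (by fun_prop)
    apply ContinuousOn.mul (by fun_prop)
    apply ContinuousOn.div (by fun_prop) (by fun_prop)
    rintro ⟨d1, d2, d3⟩ hd
    obtain ⟨⟨h1a, h1b⟩, _, h3a, h3b⟩ := hd
    exact ne_of_gt (mul_pos (by linarith) (by linarith))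
  · exact fun d _ => Real.sqrt_nonneg _
  · norm_num
  · -- SelBoundI
    intro δ₁ δ₂ η R₁ R₂ Rt₁ Rt₂ θ hδ₁ hδ₁a hδ₂ hη hηc hR₁ hR₂ hRt₁ hRt₂ hθ horth
    set E : ℝ := η * ((b-a) + δ₁ + δ₂) / ((c - η) * ((a - δ₁) + b)) with hEdef
    set C : ℝ := 4*(a+b+c+δ₂)^2 with hCdef
    have hM : 0 < (c - η) * ((a - δ₁) + b) := mul_pos (by linarith) (by linarith)
    have h0N : 0 ≤ η * ((b-a) + δ₁ + δ₂) := by nlinarith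
    have hE0 : 0 ≤ E := div_nonneg h0N hM.le
    have hden2 : (c - η) * ((a - δ₁) + b) ≤ Rt₁ * R₂ + Rt₂ * R₁ := by
      nlinarith [mul_nonneg (show (0:ℝ) ≤ Rt₁ - (c - η) by linarith [hRt₁.1])
          (show (0:ℝ) ≤ R₂ by linarith [hR₂.1]),
        mul_nonneg (show (0:ℝ) ≤ Rt₂ - (c - η) by linarith [hRt₂.1])
          (show (0:ℝ) ≤ R₁ by linarith [hR₁.1]),
        mul_nonneg (show (0:ℝ) ≤ c - η by linarith)
          (show (0:ℝ) ≤ R₂ - b by linarith [hR₂.1]),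
        mul_nonneg (show (0:ℝ) ≤ c - η by linarith)
          (show (0:ℝ) ≤ R₁ - (a - δ₁) by linarith [hR₁.1])]
    have hnum : (Rt₁ - Rt₂) * (R₂ - R₁) ≤ η * ((b-a) + δ₁ + δ₂) := by
      nlinarith [mul_nonneg (show (0:ℝ) ≤ η - (Rt₁ - Rt₂) by linarith [hRt₁.2, hRt₂.1])
          (show (0:ℝ) ≤ R₂ - R₁ by linarith [hR₁.2, hR₂.1]),
        mul_nonneg hη.le
          (show (0:ℝ) ≤ ((b + δ₂) - (a - δ₁)) - (R₂ - R₁) by linarith [hR₁.1, hR₂.2])]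
    have hEM : E * ((c - η) * ((a - δ₁) + b)) = η * ((b-a) + δ₁ + δ₂) := by
      rw [hEdef]; exact div_mul_cancel₀ _ hM.ne'
    have hE : (Rt₁ - Rt₂) * (R₂ - R₁) ≤ E * (Rt₁ * R₂ + Rt₂ * R₁) := by
      have := mul_le_mul_of_nonneg_left hden2 hE0
      rw [hEM] at this; linarith
    have res := master_54 a b c δ₁ δ₂ η R₁ R₂ Rt₁ Rt₂ θ E C hb (by linarith) (by linarith)
      hR₁ (by linarith [hR₁.2, hR₂.1]) (by nlinarith [hR₂.1, hR₂.2]) hRt₁ hRt₂ hθ horth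
      hE0 hE
      (by nlinarith [hR₁.2, sq_nonneg (b+c+δ₂), sq_nonneg (a-b-c-δ₂)])
      (by nlinarith [hR₂.2, sq_nonneg (a+c), sq_nonneg (a+c+(b+δ₂) - (b+δ₂))])
      (by nlinarith [hRt₁.2, sq_nonneg (a+b+δ₂), sq_nonneg (c-a-b-δ₂)])
      (by nlinarith [hRt₂.2, sq_nonneg (a+b+δ₂), sq_nonneg (c-a-b-δ₂)])
    exact res
  · -- continuity of h₂
    apply Real.continuous_sqrt.comp_continuousOn
    apply ContinuousOn.add (by fun_prop)
    apply ContinuousOn.mul (by fun_prop)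
    apply ContinuousOn.div (by fun_prop) (by fun_prop)
    rintro ⟨d1, d2, d3⟩ hd
    obtain ⟨⟨h1a, h1b⟩, ⟨h2a, h2b⟩, h3a, h3b⟩ := hd
    exact ne_of_gt (mul_pos (by linarith) (by linarith))
  · exact fun d _ => Real.sqrt_nonneg _
  · norm_num
  · -- SelBoundII
    intro δ₁ δ₂ η R₁ R₂ Rt₁ Rt₂ θ hδ₁ hδ₁a hδ₂ hδ₂b hη hηc hR₁ hR₂ hRt₁ hRt₂ hθ horth
    set E : ℝ := η * ((b-a) + δ₁) / ((c - η) * ((a - δ₁) + (b - δ₂))) with hEdef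
    set C : ℝ := 4*(a+b+c)^2 with hCdef
    have hM : 0 < (c - η) * ((a - δ₁) + (b - δ₂)) := mul_pos (by linarith) (by linarith)
    have h0N : 0 ≤ η * ((b-a) + δ₁) := by nlinarith
    have hE0 : 0 ≤ E := div_nonneg h0N hM.le
    have hden2 : (c - η) * ((a - δ₁) + (b - δ₂)) ≤ Rt₁ * R₂ + Rt₂ * R₁ := by
      nlinarith [mul_nonneg (show (0:ℝ) ≤ Rt₁ - (c - η) by linarith [hRt₁.1])
          (show (0:ℝ) ≤ R₂ by linarith [hR₂.1]),
        mul_nonneg (show (0:ℝ) ≤ Rt₂ - (c - η) by linarith [hRt₂.1])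
          (show (0:ℝ) ≤ R₁ by linarith [hR₁.1]),
        mul_nonneg (show (0:ℝ) ≤ c - η by linarith)
          (show (0:ℝ) ≤ R₂ - (b - δ₂) by linarith [hR₂.1]),
        mul_nonneg (show (0:ℝ) ≤ c - η by linarith)
          (show (0:ℝ) ≤ R₁ - (a - δ₁) by linarith [hR₁.1])]
    have hnum : (Rt₁ - Rt₂) * (R₂ - R₁) ≤ η * ((b-a) + δ₁) := by
      nlinarith [mul_nonneg (show (0:ℝ) ≤ η - (Rt₁ - Rt₂) by linarith [hRt₁.2, hRt₂.1])
          (show (0:ℝ) ≤ R₂ - R₁ by linarith [hR₁.2, hR₂.1]),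
        mul_nonneg hη.le
          (show (0:ℝ) ≤ (b - (a - δ₁)) - (R₂ - R₁) by linarith [hR₁.1, hR₂.2])]
    have hEM : E * ((c - η) * ((a - δ₁) + (b - δ₂))) = η * ((b-a) + δ₁) := by
      rw [hEdef]; exact div_mul_cancel₀ _ hM.ne'
    have hE : (Rt₁ - Rt₂) * (R₂ - R₁) ≤ E * (Rt₁ * R₂ + Rt₂ * R₁) := by
      have := mul_le_mul_of_nonneg_left hden2 hE0
      rw [hEM] at this; linarith
    have res := master_54 a b c δ₁ δ₂ η R₁ R₂ Rt₁ Rt₂ θ E C hb (by linarith) (by linarith)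
      hR₁ (by linarith [hR₁.2, hR₂.1]) (by nlinarith [hR₂.1, hR₂.2]) hRt₁ hRt₂ hθ horth
      hE0 hE
      (by nlinarith [hR₁.2, sq_nonneg (b+c)])
      (by nlinarith [hR₂.2, sq_nonneg (a+c)])
      (by nlinarith [hRt₁.2, sq_nonneg (a+b)])
      (by nlinarith [hRt₂.2, sq_nonneg (a+b)])
    exact res
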